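/- For real numbers s ≥ 1 and x, y ≥ 1: (1/2)(|x² − 1|^s + |y² − 1|^s) · (x − y)² + (1/2)(|x² − 1|^s − |y² − 1|^s) · (x² − y²) ≥ 0, with equality only when x = y, provided additionally x > 1 or y > 1. -/
import Mathlib


theorem stmt_6 (s x y : ℝ) (hs : 1 ≤ s) (hx : 1 ≤ x) (hy : 1 ≤ y) :
    0 ≤ (1 / 2) * (|x ^ 2 - 1| ^ s + |y ^ 2 - 1| ^ s) * (x - y) ^ 2 +
        (1 / 2) * (|x ^ 2 - 1| ^ s - |y ^ 2 - 1| ^ s) * (x ^ 2 - y ^ 2) ∧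
    ((1 < x ∨ 1 < y) →
      (1 / 2) * (|x ^ 2 - 1| ^ s + |y ^ 2 - 1| ^ s) * (x - y) ^ 2 +
        (1 / 2) * (|x ^ 2 - 1| ^ s - |y ^ 2 - 1| ^ s) * (x ^ 2 - y ^ 2) = 0 →
      x = y) := by
  have hs0 : (0:ℝ) < s := lt_of_lt_of_le one_pos hs
  have hax : |x ^ 2 - 1| = x ^ 2 - 1 := abs_of_nonneg (by nlinarith)
  have hay : |y ^ 2 - 1| = y ^ 2 - 1 := abs_of_nonneg (by nlinarith)
  have hmono : ∀ u v : ℝ, 1 ≤ u → u ≤ v →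
      (u ^ 2 - 1) ^ s * u ≤ (v ^ 2 - 1) ^ s * v := by
    intro u v hu huv
    have h1 : (u ^ 2 - 1) ^ s ≤ (v ^ 2 - 1) ^ s :=
      Real.rpow_le_rpow (by nlinarith) (by nlinarith) hs0.le
    have h2 : (0:ℝ) ≤ (u ^ 2 - 1) ^ s := Real.rpow_nonneg (by nlinarith) s
    nlinarith
  have hstrict : ∀ u v : ℝ, 1 ≤ u → u < v →
      (u ^ 2 - 1) ^ s * u < (v ^ 2 - 1) ^ s * v := by
    intro u v hu huv
    have h1 : (u ^ 2 - 1) ^ s < (v ^ 2 - 1) ^ s :=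
      Real.rpow_lt_rpow (by nlinarith) (by nlinarith) hs0
    have h2 : (0:ℝ) ≤ (u ^ 2 - 1) ^ s := Real.rpow_nonneg (by nlinarith) s
    nlinarith
  have hE : (1 / 2) * (|x ^ 2 - 1| ^ s + |y ^ 2 - 1| ^ s) * (x - y) ^ 2 +
        (1 / 2) * (|x ^ 2 - 1| ^ s - |y ^ 2 - 1| ^ s) * (x ^ 2 - y ^ 2)
      = (x - y) * ((x ^ 2 - 1) ^ s * x - (y ^ 2 - 1) ^ s * y) := by
    rw [hax, hay]; ring
  constructor
  · rw [hE]
    rcases le_total y x with h | h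
    · exact mul_nonneg (by linarith) (by linarith [hmono y x hy h])
    · have := hmono x y hx h
      nlinarith
  · intro _ heq
    rw [hE] at heq
    by_contra hne
    rcases lt_or_gt_of_ne hne with h | h
    · have := hstrict x y hx h
      nlinarith
    · have := hstrict y x hy h
      nlinarith
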